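/- For integers k, j ≥ 0: if μ > −1 then z ∂/∂z Q^μ_{k,j}(z,w) + (j+μ+1) Q^μ_{k,j}(z,w) = ((k+μ+1)(j+μ+1)/(μ+1)) Q^{μ+1}_{k,j}(z,w); and if μ > 0 then (1−zw) z ∂/∂z Q^μ_{k,j}(z,w) − [k(1−zw) + μ] Q^μ_{k,j}(z,w) = −μ Q^{μ−1}_{k,j}(z,w). These are identities of bivariate polynomials in (z,w). -/

import Mathlib

noncomputable def jacobiP (α β : ℝ) (n : ℕ) : Polynomial ℝ :=
  (n.factorial : ℝ)⁻¹ •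
    ∑ k ∈ Finset.range (n + 1),
      ((n.choose k : ℝ) * ((ascPochhammer ℝ (n - k)).eval ((k : ℝ) + α + 1)) *
          ((ascPochhammer ℝ k).eval ((n : ℝ) + α + β + 1))) •
        ((Polynomial.X - 1) * Polynomial.C (2⁻¹ : ℝ)) ^ k

noncomputable def zernikeQ (μ : ℝ) (k j : ℕ) : MvPolynomial (Fin 2) ℂ :=
  if j ≤ k then
    MvPolynomial.C ((((j.factorial : ℝ) / ((ascPochhammer ℝ j).eval (μ + 1)) : ℝ) : ℂ)) *
      MvPolynomial.X 0 ^ (k - j) *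
      Polynomial.aeval (2 * MvPolynomial.X 0 * MvPolynomial.X 1 - 1)
        (jacobiP μ ((k - j : ℕ) : ℝ) j)
  else
    MvPolynomial.C ((((k.factorial : ℝ) / ((ascPochhammer ℝ k).eval (μ + 1)) : ℝ) : ℂ)) *
      MvPolynomial.X 1 ^ (j - k) *
      Polynomial.aeval (2 * MvPolynomial.X 0 * MvPolynomial.X 1 - 1)
        (jacobiP μ ((j - k : ℕ) : ℝ) k)

noncomputable def Acoef (μ : ℝ) (n m i : ℕ) : ℝ :=
  ((n.choose i : ℝ) * ((ascPochhammer ℝ (n - i)).eval ((i : ℝ) + μ + 1)) *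
      ((ascPochhammer ℝ i).eval ((n : ℝ) + μ + m + 1))) /
    ((ascPochhammer ℝ n).eval (μ + 1))

lemma poch_succ_left (a : ℝ) (l : ℕ) :
    (ascPochhammer ℝ (l+1)).eval a = a * (ascPochhammer ℝ l).eval (a+1) := by
  rw [ascPochhammer_succ_left]
  simp [Polynomial.eval_comp, mul_comm]

lemma poch_shift (a : ℝ) (i : ℕ) (ha : a ≠ 0) :
    (ascPochhammer ℝ i).eval (a+1) = (ascPochhammer ℝ i).eval a * (a + i) / a := by
  have e1 := poch_succ_left a i
  rw [ascPochhammer_succ_eval] at e1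
  field_simp
  linarith [e1]

lemma Acoef_top (μ : ℝ) (n m : ℕ) : Acoef μ n m (n+1) = 0 := by
  simp [Acoef, Nat.choose_succ_self]

lemma Acoef_zero (μ : ℝ) (n m : ℕ) (h : (ascPochhammer ℝ n).eval (μ+1) ≠ 0) :
    Acoef μ n m 0 = 1 := by
  simp only [Acoef, Nat.choose_zero_right, Nat.cast_one, Nat.cast_zero, Nat.sub_zero,
    zero_add, one_mul, ascPochhammer_zero, Polynomial.eval_one, mul_one]
  exact div_self h

lemma choose_cast (n i : ℕ) (hi : i < n) :
    ((n.choose (i+1) : ℝ)) = (n.choose i : ℝ) * ((n:ℝ) - i) / ((i:ℝ)+1) := by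
  have h := Nat.choose_succ_right_eq n i
  have h2 : ((n.choose (i+1) : ℝ)) * ((i:ℝ)+1) = (n.choose i : ℝ) * ((n:ℝ) - i) := by
    have hcast := congrArg (Nat.cast (R := ℝ)) h
    push_cast [Nat.cast_sub hi.le] at hcast
    exact hcast
  field_simp at h2 ⊢
  linarith [h2]

lemma coeff1 (μ : ℝ) (hμ : -1 < μ) (n m i : ℕ) (hi : i ≤ n) :
    ((n:ℝ)+m+μ+1+(i:ℝ)) * Acoef μ n m i + ((i:ℝ)+1) * Acoef μ n m (i+1)
      = (((n:ℝ)+m+μ+1)*((n:ℝ)+μ+1)/(μ+1)) * Acoef (μ+1) n m i := by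
  have h1 : (0:ℝ) < μ + 1 := by linarith
  obtain ⟨l, rfl⟩ := Nat.exists_eq_add_of_le hi
  cases l with
  | zero =>
    simp only [Nat.add_zero]
    have hP0 : (0:ℝ) < (ascPochhammer ℝ i).eval (μ+1) := ascPochhammer_pos i _ h1
    have hb2 : (0:ℝ) < (i:ℝ)+μ+(m:ℝ)+1 := by
      have : (0:ℝ) ≤ (i:ℝ) + (m:ℝ) := by positivity
      linarith
    rw [Acoef, Acoef, Acoef]
    simp only [Nat.sub_self, Nat.choose_self, Nat.choose_succ_self,
      ascPochhammer_zero, Polynomial.eval_one, Nat.cast_zero, Nat.cast_one]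
    rw [show ((i:ℝ) + (μ+1) + (m:ℝ) + 1) = ((i:ℝ)+μ+(m:ℝ)+1) + 1 by ring,
      poch_shift _ i hb2.ne',
      show (μ+1+1 : ℝ) = (μ+1) + 1 by ring, poch_shift _ i h1.ne']
    field_simp
    ring
  | succ l =>
    have hP0 : (0:ℝ) < (ascPochhammer ℝ (i+(l+1))).eval (μ+1) := ascPochhammer_pos _ _ h1
    have h1n : i + (l+1) - i = l + 1 := by omega
    have h2n : i + (l+1) - (i+1) = l := by omega
    have hblt : (0:ℝ) < (i:ℝ)+((l:ℝ)+1)+μ+(m:ℝ)+1 := by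
      have : (0:ℝ) ≤ (i:ℝ) + (l:ℝ) + (m:ℝ) := by positivity
      linarith
    rw [Acoef, Acoef, Acoef, h1n, h2n, choose_cast _ i (by omega)]
    push_cast
    rw [show ((i:ℝ) + 1 + μ + 1) = (i:ℝ) + μ + 1 + 1 by ring,
      show ((i:ℝ) + (μ + 1) + 1) = (i:ℝ) + μ + 1 + 1 by ring,
      poch_succ_left ((i:ℝ)+μ+1) l,
      ascPochhammer_succ_eval (S := ℝ) l ((i:ℝ)+μ+1+1),
      ascPochhammer_succ_eval (S := ℝ) i ((i:ℝ)+((l:ℝ)+1)+μ+(m:ℝ)+1),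
      show ((i:ℝ) + ((l:ℝ)+1) + (μ+1) + (m:ℝ) + 1) = ((i:ℝ)+((l:ℝ)+1)+μ+(m:ℝ)+1) + 1 by ring,
      poch_shift ((i:ℝ)+((l:ℝ)+1)+μ+(m:ℝ)+1) i hblt.ne',
      show (μ+1+1 : ℝ) = (μ+1) + 1 by ring, poch_shift (μ+1) _ h1.ne']
    have hi1 : ((i:ℝ)+1) ≠ 0 := by positivity
    field_simp
    push_cast
    ring

lemma coeff2 (μ : ℝ) (hμ : 0 < μ) (n m i : ℕ) (hi : i ≤ n) :
    ((n:ℝ) - (i:ℝ)) * Acoef μ n m i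
      = ((i:ℝ)+1+μ) * Acoef μ n m (i+1) - μ * Acoef (μ-1) n m (i+1) := by
  have h1 : (0:ℝ) < μ + 1 := by linarith
  obtain ⟨l, rfl⟩ := Nat.exists_eq_add_of_le hi
  cases l with
  | zero =>
    simp [Acoef, Nat.choose_succ_self]
  | succ l =>
    have hP0 : (0:ℝ) < (ascPochhammer ℝ (i+(l+1))).eval (μ+1) := ascPochhammer_pos _ _ h1
    have h1n : i + (l+1) - i = l + 1 := by omega
    have h2n : i + (l+1) - (i+1) = l := by omega
    have hbase : (0:ℝ) < (i:ℝ)+μ+1 := by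
      have : (0:ℝ) ≤ (i:ℝ) := by positivity
      linarith
    have hmun : (0:ℝ) < μ + ((i:ℝ)+((l:ℝ)+1)) := by
      have : (0:ℝ) ≤ (i:ℝ) + (l:ℝ) := by positivity
      linarith
    have hmu' : (ascPochhammer ℝ (i+(l+1))).eval μ
        = (ascPochhammer ℝ (i+(l+1))).eval (μ+1) * μ / (μ + ((i:ℝ)+((l:ℝ)+1))) := by
      have h := poch_shift μ (i+(l+1)) hμ.ne'
      rw [h]
      push_cast
      field_simp
    rw [Acoef, Acoef, Acoef, h1n, h2n, choose_cast _ i (by omega)]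
    push_cast
    rw [show (μ - 1 + 1 : ℝ) = μ by ring,
      show ((i:ℝ) + 1 + μ + 1) = (i:ℝ) + μ + 1 + 1 by ring,
      show ((i:ℝ) + 1 + (μ-1) + 1) = (i:ℝ) + μ + 1 by ring,
      poch_succ_left ((i:ℝ)+μ+1) l,
      poch_shift ((i:ℝ)+μ+1) l hbase.ne',
      ascPochhammer_succ_eval (S := ℝ) i ((i:ℝ)+((l:ℝ)+1)+μ+(m:ℝ)+1),
      poch_succ_left ((i:ℝ)+((l:ℝ)+1)+(μ-1)+(m:ℝ)+1) i,
      show ((i:ℝ)+((l:ℝ)+1)+(μ-1)+(m:ℝ)+1+1) = (i:ℝ)+((l:ℝ)+1)+μ+(m:ℝ)+1 by ring,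
      hmu']
    have hi1 : ((i:ℝ)+1) ≠ 0 := by positivity
    field_simp
    ring

open MvPolynomial

noncomputable def U : MvPolynomial (Fin 2) ℂ := X 0 * X 1 - 1

lemma algHelp (r : ℝ) : algebraMap ℝ (MvPolynomial (Fin 2) ℂ) r = C ((r : ℝ) : ℂ) := by
  rw [IsScalarTower.algebraMap_apply ℝ ℂ (MvPolynomial (Fin 2) ℂ), algebraMap_eq]
  norm_num

lemma aeval_e : (Polynomial.aeval (2 * X 0 * X 1 - 1 : MvPolynomial (Fin 2) ℂ))
    ((Polynomial.X - 1) * Polynomial.C (2⁻¹ : ℝ)) = U := by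
  simp only [map_mul, map_sub, Polynomial.aeval_X, Polynomial.aeval_C, map_one, algHelp]
  rw [U]
  have h2 : (C ((2⁻¹:ℝ):ℂ) : MvPolynomial (Fin 2) ℂ) * 2 = 1 := by
    rw [show (2:MvPolynomial (Fin 2) ℂ) = C 2 from (map_ofNat C 2).symm, ← map_mul]
    norm_num
  linear_combination (X 0 * X 1 - 1 : MvPolynomial (Fin 2) ℂ) * h2


lemma Cmul_helper (c1 c2 c3 cA : ℂ) (h : c1 * c2 * c3 = cA) (T V : MvPolynomial (Fin 2) ℂ) :
    C c1 * T * (C c2 * (C c3 * V)) = C cA * (T * V) := by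
  rw [← h, map_mul, map_mul]; ring

lemma coef_helper (a p q : ℝ) (ha : a ≠ 0) :
    ((a / p : ℝ) : ℂ) * ((a⁻¹ : ℝ) : ℂ) * ((q : ℝ) : ℂ) = ((q / p : ℝ) : ℂ) := by
  have h : a / p * a⁻¹ * q = q / p := by
    rw [div_eq_mul_inv, div_eq_mul_inv, show a * p⁻¹ * a⁻¹ * q = (a * a⁻¹) * (q * p⁻¹) from by ring,
      mul_inv_cancel₀ ha, one_mul]
  exact_mod_cast congrArg Complex.ofReal h

lemma zernikeQ_eq_of_le (μ : ℝ) {k j : ℕ} (h : j ≤ k) :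
    zernikeQ μ k j = ∑ i ∈ Finset.range (j+1),
      C ((Acoef μ j (k-j) i : ℝ) : ℂ) * (X 0 ^ (k-j) * U ^ i) := by
  rw [zernikeQ, if_pos h, jacobiP, map_smul, map_sum, Algebra.smul_def, algHelp,
    Finset.mul_sum, Finset.mul_sum]
  refine Finset.sum_congr rfl fun i _ => ?_
  rw [map_smul, map_pow, aeval_e, Algebra.smul_def, algHelp, Acoef]
  exact Cmul_helper _ _ _ _ (coef_helper _ _ _ (Nat.cast_ne_zero.mpr (Nat.factorial_ne_zero j))) _ _

lemma zernikeQ_eq_of_gt (μ : ℝ) {k j : ℕ} (h : ¬ (j ≤ k)) :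
    zernikeQ μ k j = ∑ i ∈ Finset.range (k+1),
      C ((Acoef μ k (j-k) i : ℝ) : ℂ) * (X 1 ^ (j-k) * U ^ i) := by
  rw [zernikeQ, if_neg h, jacobiP, map_smul, map_sum, Algebra.smul_def, algHelp,
    Finset.mul_sum, Finset.mul_sum]
  refine Finset.sum_congr rfl fun i _ => ?_
  rw [map_smul, map_pow, aeval_e, Algebra.smul_def, algHelp, Acoef]
  exact Cmul_helper _ _ _ _ (coef_helper _ _ _ (Nat.cast_ne_zero.mpr (Nat.factorial_ne_zero k))) _ _

open Finset

lemma pderiv_U : pderiv (0 : Fin 2) U = X 1 := by simp [U, pderiv_mul]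

lemma hT0 (m : ℕ) : X 0 * pderiv (0:Fin 2) ((X 0 : MvPolynomial (Fin 2) ℂ) ^ m)
    = C (m:ℂ) * X 0 ^ m := by
  rw [pderiv_pow, pderiv_X_self, mul_one]
  cases m with
  | zero => simp
  | succ m =>
      rw [Nat.add_sub_cancel, C_eq_coe_nat]
      push_cast
      ring
lemma hT1 (m : ℕ) : X 0 * pderiv (0:Fin 2) ((X 1 : MvPolynomial (Fin 2) ℂ) ^ m)
    = C (0:ℂ) * X 1 ^ m := by
  rw [pderiv_pow, pderiv_X_of_ne (by decide)]
  simp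

lemma key_deriv (T : MvPolynomial (Fin 2) ℂ) (c : ℂ) (hT : X 0 * pderiv (0:Fin 2) T = C c * T)
    (i : ℕ) :
    X 0 * pderiv (0:Fin 2) (T * U^i) =
      C (c + (i:ℂ)) * (T * U^i) + C ((i:ℂ)) * (T * U^(i-1)) := by
  rw [pderiv_mul, pderiv_pow, pderiv_U]
  cases i with
  | zero => simp [hT]
  | succ i =>
      rw [Nat.add_sub_cancel, map_add, U]
      rw [show (C ((i+1:ℕ):ℂ) : MvPolynomial (Fin 2) ℂ) = ((i+1:ℕ):MvPolynomial (Fin 2) ℂ) from (C_eq_coe_nat _).symm]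
      push_cast
      linear_combination ((X 0 * X 1 - 1:MvPolynomial (Fin 2) ℂ))^(i+1) * hT

lemma shift_down (n : ℕ) (g : ℕ → MvPolynomial (Fin 2) ℂ) (f : ℕ → ℂ)
    (h0 : f 0 = 0) (htop : f (n+1) = 0) :
    ∑ i ∈ range (n+1), C (f i) * g (i-1) = ∑ i ∈ range (n+1), C (f (i+1)) * g i := by
  rw [Finset.sum_range_succ' (fun i => C (f i) * g (i-1)) n,
    Finset.sum_range_succ (fun i => C (f (i+1)) * g i) n]
  simp [h0, htop]

lemma shift_up' (n : ℕ) (g : ℕ → MvPolynomial (Fin 2) ℂ) (f h : ℕ → ℂ)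
    (h0 : h 0 = 0) (htop : f n = 0) (hfh : ∀ i < n, f i = h (i+1)) :
    ∑ i ∈ range (n+1), C (f i) * g (i+1) = ∑ i ∈ range (n+1), C (h i) * g i := by
  rw [Finset.sum_range_succ, htop, Finset.sum_range_succ' (fun i => C (h i) * g i) n]
  simp only [map_zero, zero_mul, add_zero, h0]
  exact Finset.sum_congr rfl fun i hi => by rw [hfh i (Finset.mem_range.mp hi)]

lemma assemble1 (n : ℕ) (T : MvPolynomial (Fin 2) ℂ) (c : ℂ)
    (hT : X 0 * pderiv (0:Fin 2) T = C c * T) (a a' : ℕ → ℂ) (cj ρ : ℂ)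
    (htop : a (n+1) = 0)
    (hcoef : ∀ i ≤ n, (c + (i:ℂ) + cj) * a i + ((i:ℂ)+1) * a (i+1) = ρ * a' i) :
    X 0 * pderiv (0:Fin 2) (∑ i ∈ range (n+1), C (a i) * (T * U^i))
      + C cj * ∑ i ∈ range (n+1), C (a i) * (T * U^i)
    = C ρ * ∑ i ∈ range (n+1), C (a' i) * (T * U^i) := by
  rw [map_sum, Finset.mul_sum, Finset.mul_sum, Finset.mul_sum, ← Finset.sum_add_distrib]
  have step1 : ∀ i ∈ range (n+1),
      X 0 * pderiv (0:Fin 2) (C (a i) * (T * U^i)) + C cj * (C (a i) * (T * U^i))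
      = C ((c + (i:ℂ) + cj) * a i) * (T * U^i) + C ((i:ℂ) * a i) * (T * U^(i-1)) := by
    intro i _
    rw [pderiv_C_mul]
    have hk := key_deriv T c hT i
    simp only [map_add, map_mul] at hk ⊢
    linear_combination C (a i) * hk
  rw [Finset.sum_congr rfl step1, Finset.sum_add_distrib,
    shift_down n (fun i => T * U^i) (fun i => (i:ℂ) * a i) (by simp) (by simp [htop]),
    ← Finset.sum_add_distrib]
  refine Finset.sum_congr rfl fun i hi => ?_
  have hc := hcoef i (Nat.lt_succ_iff.mp (Finset.mem_range.mp hi))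
  rw [← add_mul, ← map_add]
  push_cast
  rw [hc, map_mul]
  ring

lemma assemble2 (n : ℕ) (T : MvPolynomial (Fin 2) ℂ) (c : ℂ)
    (hT : X 0 * pderiv (0:Fin 2) T = C c * T) (a a' : ℕ → ℂ) (κ mu : ℂ)
    (hzero : mu * a 0 = mu * a' 0)
    (hκ : κ - c - (n:ℂ) = 0)
    (hcoef : ∀ i < n, (κ - c - (i:ℂ)) * a i = ((i:ℂ)+1+mu) * a (i+1) - mu * a' (i+1)) :
    (1 - X 0 * X 1) * (X 0 * pderiv (0:Fin 2) (∑ i ∈ range (n+1), C (a i) * (T * U^i)))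
      - (C κ * (1 - X 0 * X 1) + C mu) * ∑ i ∈ range (n+1), C (a i) * (T * U^i)
    = -(C mu * ∑ i ∈ range (n+1), C (a' i) * (T * U^i)) := by
  rw [map_sum, Finset.mul_sum, Finset.mul_sum, Finset.mul_sum, ← Finset.sum_sub_distrib]
  have step1 : ∀ i ∈ range (n+1),
      (1 - X 0 * X 1) * (X 0 * pderiv (0:Fin 2) (C (a i) * (T * U^i)))
        - (C κ * (1 - X 0 * X 1) + C mu) * (C (a i) * (T * U^i))
      = C ((κ - c - (i:ℂ)) * a i) * (T * U^(i+1))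
          - C (((i:ℂ) + mu) * a i) * (T * U^i) := by
    intro i _
    rw [pderiv_C_mul]
    have hk := key_deriv T c hT i
    rw [show (1 - X 0 * X 1 : MvPolynomial (Fin 2) ℂ) = -U from by rw [U]; ring]
    cases i with
    | zero =>
        simp only [Nat.cast_zero, map_add, map_mul, map_sub, map_zero, pow_zero] at hk ⊢
        linear_combination (-U) * C (a 0) * hk
    | succ i =>
        rw [Nat.add_sub_cancel] at hk
        simp only [map_add, map_mul, map_sub] at hk ⊢
        push_cast at hk ⊢
        linear_combination (-U) * C (a (i+1)) * hk
  rw [Finset.sum_congr rfl step1, Finset.sum_sub_distrib,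
    shift_up' n (fun i => T * U^i) (fun i => (κ - c - (i:ℂ)) * a i)
      (fun i => ((i:ℂ) + mu) * a i - mu * a' i)
      (by push_cast; linear_combination hzero)
      (by show (κ - c - (n:ℂ)) * a n = 0; rw [hκ, zero_mul])
      (fun i hi => by push_cast; linear_combination hcoef i hi),
    ← Finset.sum_sub_distrib, Finset.mul_sum, ← Finset.sum_neg_distrib]
  refine Finset.sum_congr rfl fun i _ => ?_
  simp only [map_add, map_mul, map_sub]
  ring


open MvPolynomial Finset in

theorem zernike_ladder_Z3 (μ : ℝ) (k j : ℕ) :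
    (μ > -1 →
      X 0 * pderiv (0 : Fin 2) (zernikeQ μ k j) +
          C ((((j : ℝ) + μ + 1 : ℝ)) : ℂ) * zernikeQ μ k j =
        C (((((k : ℝ) + μ + 1) * ((j : ℝ) + μ + 1) / (μ + 1) : ℝ)) : ℂ) *
          zernikeQ (μ + 1) k j) ∧
    (μ > 0 →
      (1 - X 0 * X 1) * (X 0 * pderiv (0 : Fin 2) (zernikeQ μ k j)) -
          (C (((k : ℝ)) : ℂ) * (1 - X 0 * X 1) + C ((μ : ℂ))) * zernikeQ μ k j =
        -(C ((μ : ℂ)) * zernikeQ (μ - 1) k j)) := by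
  constructor
  · intro hμ
    by_cases h : j ≤ k
    · rw [zernikeQ_eq_of_le μ h, zernikeQ_eq_of_le (μ+1) h]
      refine assemble1 j (X 0 ^ (k-j)) (((k-j:ℕ)):ℂ) (hT0 _) _ _ _ _ ?_ ?_
      · rw [Acoef_top]; norm_num
      · intro i hi
        have hc := congrArg (Complex.ofReal) (coeff1 μ hμ j (k-j) i hi)
        push_cast [Nat.cast_sub h] at hc ⊢
        linear_combination hc
    · rw [zernikeQ_eq_of_gt μ h, zernikeQ_eq_of_gt (μ+1) h]
      refine assemble1 k (X 1 ^ (j-k)) 0 (hT1 _) _ _ _ _ ?_ ?_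
      · rw [Acoef_top]; norm_num
      · intro i hi
        have hc := congrArg (Complex.ofReal) (coeff1 μ hμ k (j-k) i hi)
        push_cast [Nat.cast_sub (le_of_not_ge h)] at hc ⊢
        linear_combination hc
  · intro hμ
    have h1 : (0:ℝ) < μ + 1 := by linarith
    by_cases h : j ≤ k
    · rw [zernikeQ_eq_of_le μ h, zernikeQ_eq_of_le (μ-1) h]
      refine assemble2 j (X 0 ^ (k-j)) (((k-j:ℕ)):ℂ) (hT0 _) _ _ _ _ ?_ ?_ ?_
      · rw [Acoef_zero μ j (k-j) (ascPochhammer_pos _ _ h1).ne',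
          Acoef_zero (μ-1) j (k-j)
            (by rw [show (μ-1+1:ℝ) = μ by ring]; exact (ascPochhammer_pos _ _ hμ).ne')]
      · push_cast [Nat.cast_sub h]; ring
      · intro i hi
        have hc := congrArg (Complex.ofReal) (coeff2 μ hμ j (k-j) i (le_of_lt hi))
        push_cast [Nat.cast_sub h] at hc ⊢
        linear_combination hc
    · rw [zernikeQ_eq_of_gt μ h, zernikeQ_eq_of_gt (μ-1) h]
      refine assemble2 k (X 1 ^ (j-k)) 0 (hT1 _) _ _ _ _ ?_ ?_ ?_
      · rw [Acoef_zero μ k (j-k) (ascPochhammer_pos _ _ h1).ne',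
          Acoef_zero (μ-1) k (j-k)
            (by rw [show (μ-1+1:ℝ) = μ by ring]; exact (ascPochhammer_pos _ _ hμ).ne')]
      · push_cast; ring
      · intro i hi
        have hc := congrArg (Complex.ofReal) (coeff2 μ hμ k (j-k) i (le_of_lt hi))
        push_cast [Nat.cast_sub (le_of_not_ge h)] at hc ⊢
        linear_combination hc
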